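/- Let p ≥ 1 be a real number. There exists a constant C > 0, depending only on p, such that for every continuously differentiable function f : [0,∞) → ℝ with compact support, sup_{x ≥ 0} |f(x)|/(1 + x^p) ≤ C·( ∫₀^∞ (f(x)/(1 + x^p))² dx + ∫₀^∞ (f'(x)/(1 + x^p))² dx )^{1/2}. -/

import Mathlib

open MeasureTheory

set_option maxHeartbeats 1000000 in
/-- **Continuous Sobolev embedding `W^{1,p} ⊂ C^{0,p}`.**
For every `p ≥ 1` there is a constant `C > 0` such that every compactly supported `C¹`
function `f` satisfies
`sup_{x ≥ 0} |f(x)|/(1 + x^p) ≤ C (‖f/(1+x^p)‖_{L²(0,∞)}² + ‖f'/(1+x^p)‖_{L²(0,∞)}²)^{1/2}`. -/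
theorem weighted_sobolev_embedding (p : ℝ) (hp : 1 ≤ p) :
    ∃ C > (0 : ℝ), ∀ f : ℝ → ℝ, ContDiff ℝ 1 f → HasCompactSupport f →
      ∀ x ≥ (0 : ℝ),
        |f x| / (1 + x ^ p) ≤
          C * Real.sqrt
            ((∫ y in Set.Ioi (0 : ℝ), (f y / (1 + y ^ p)) ^ 2) +
              ∫ y in Set.Ioi (0 : ℝ), (deriv f y / (1 + y ^ p)) ^ 2) := by
  have hp0 : (0 : ℝ) < p := lt_of_lt_of_le one_pos hp
  refine ⟨1 + 2 * p, by linarith, ?_⟩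
  intro f hf hsupp x hx
  set w : ℝ → ℝ := fun y => 1 + y ^ p with hwdef
  have hwpos : ∀ y : ℝ, 0 ≤ y → 0 < w y := by
    intro y hy
    have : (0 : ℝ) ≤ y ^ p := Real.rpow_nonneg hy p
    simp only [hwdef]; linarith
  have hwcont : Continuous w :=
    continuous_const.add (Real.continuous_rpow_const hp0.le)
  have hecont : Continuous (fun y : ℝ => y ^ (p - 1)) :=
    Real.continuous_rpow_const (by linarith)
  have hfc : Continuous f := hf.continuous
  have hf'c : Continuous (deriv f) := hf.continuous_deriv le_rfl
  -- choose T beyond the support of f, with x < T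
  obtain ⟨R, hR⟩ := hsupp.isCompact.isBounded.subset_closedBall 0
  set T : ℝ := max x R + 1 with hTdef
  have hxT : x < T := lt_of_le_of_lt (le_max_left x R) (lt_add_one _)
  have hT0 : (0 : ℝ) < T := lt_of_le_of_lt hx hxT
  have hRT : R < T := lt_of_le_of_lt (le_max_right x R) (lt_add_one _)
  have hfT : ∀ y : ℝ, T ≤ y → f y = 0 := by
    intro y hy
    by_contra h
    have hmem := hR (subset_tsupport f h)
    rw [Metric.mem_closedBall, Real.dist_eq, sub_zero] at hmem
    have : y ≤ R := le_trans (le_abs_self y) hmem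
    linarith
  have hf'T : ∀ y : ℝ, T ≤ y → deriv f y = 0 := by
    intro y hy
    by_contra h
    have hmem := hR (closure_minimal support_deriv_subset (isClosed_tsupport f) (subset_closure h))
    rw [Metric.mem_closedBall, Real.dist_eq, sub_zero] at hmem
    have : y ≤ R := le_trans (le_abs_self y) hmem
    linarith
  -- the two weighted integrands, integrable on `Ioi 0`
  set g₁ : ℝ → ℝ := fun y => (f y / w y) ^ 2 with hg₁def
  set g₂ : ℝ → ℝ := fun y => (deriv f y / w y) ^ 2 with hg₂def
  have key_int : ∀ g : ℝ → ℝ, Continuous g → (∀ y, T ≤ y → g y = 0) →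
      IntegrableOn (fun y => (g y / w y) ^ 2) (Set.Ioi (0 : ℝ)) := by
    intro g hgc hg0
    have hsplit : Set.Ioi (0 : ℝ) = Set.Ioc 0 T ∪ Set.Ioi T :=
      (Set.Ioc_union_Ioi_eq_Ioi hT0.le).symm
    rw [hsplit]
    apply MeasureTheory.IntegrableOn.union
    · have hcont : ContinuousOn (fun y => (g y / w y) ^ 2) (Set.Icc 0 T) := by
        apply ContinuousOn.pow
        apply ContinuousOn.div hgc.continuousOn hwcont.continuousOn
        intro y hy
        exact (hwpos y hy.1).ne'
      exact (hcont.integrableOn_compact isCompact_Icc).mono_set Set.Ioc_subset_Icc_self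
    · apply (integrableOn_zero (μ := volume) (s := Set.Ioi T)).congr_fun
      · intro y hy
        simp [hg0 y (le_of_lt hy)]
      · exact measurableSet_Ioi
  have hI₁ : IntegrableOn g₁ (Set.Ioi (0 : ℝ)) := key_int f hfc hfT
  have hI₂ : IntegrableOn g₂ (Set.Ioi (0 : ℝ)) := key_int (deriv f) hf'c hf'T
  have hg₁nonneg : ∀ y, 0 ≤ g₁ y := fun y => sq_nonneg _
  have hg₂nonneg : ∀ y, 0 ≤ g₂ y := fun y => sq_nonneg _
  -- derivative of h := f²/w²
  set D : ℝ → ℝ := fun y =>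
    (2 * f y * deriv f y * w y ^ 2 - f y ^ 2 * (2 * w y * (p * y ^ (p - 1)))) /
      (w y ^ 2) ^ 2 with hDdef
  have hderiv : ∀ y ∈ Set.uIcc x T, HasDerivAt (fun y => f y ^ 2 / w y ^ 2) (D y) y := by
    intro y hy
    rw [Set.uIcc_of_le hxT.le] at hy
    have hy0 : (0 : ℝ) ≤ y := le_trans hx hy.1
    have hwy : (0 : ℝ) < w y := hwpos y hy0
    have hfd : HasDerivAt f (deriv f y) y := (hf.differentiable (by norm_num) y).hasDerivAt
    have hF : HasDerivAt (fun y => f y ^ 2) (2 * f y * deriv f y) y := by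
      have := hfd.fun_pow 2
      simpa [mul_comm, mul_assoc, mul_left_comm] using this
    have hwd : HasDerivAt w (p * y ^ (p - 1)) y := by
      simpa [hwdef] using (Real.hasDerivAt_rpow_const (x := y) (p := p) (Or.inr hp)).const_add 1
    have hW : HasDerivAt (fun y => w y ^ 2) (2 * w y * (p * y ^ (p - 1))) y := by
      have := hwd.fun_pow 2
      simpa [mul_comm, mul_assoc, mul_left_comm] using this
    have := hF.fun_div hW (by positivity)
    simpa [hDdef] using this
  -- integrability of D on [x, T]
  have hDint : IntervalIntegrable D volume x T := by
    apply ContinuousOn.intervalIntegrable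
    rw [Set.uIcc_of_le hxT.le]
    have hnum : Continuous (fun y =>
        2 * f y * deriv f y * w y ^ 2 - f y ^ 2 * (2 * w y * (p * y ^ (p - 1)))) := by
      fun_prop
    apply ContinuousOn.div hnum.continuousOn (by fun_prop)
    intro y hy
    have : (0 : ℝ) < w y := hwpos y (le_trans hx hy.1)
    positivity
  -- FTC
  have hFTC : f T ^ 2 / w T ^ 2 - f x ^ 2 / w x ^ 2 = ∫ y in x..T, D y :=
    (intervalIntegral.integral_eq_sub_of_hasDerivAt hderiv hDint).symm
  have hfx2 : f x ^ 2 / w x ^ 2 = ∫ y in x..T, -D y := by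
    rw [intervalIntegral.integral_neg, ← hFTC, hfT T le_rfl]
    ring
  -- pointwise bound on [x, T]
  have hptwise : ∀ y ∈ Set.Icc x T, -D y ≤ (1 + 2 * p) * (g₁ y + g₂ y) := by
    intro y hy
    have hy0 : (0 : ℝ) ≤ y := le_trans hx hy.1
    have hwy : (0 : ℝ) < w y := hwpos y hy0
    set a := f y
    set b := deriv f y
    set c := w y
    set e := y ^ (p - 1) with hedef
    have he0 : (0 : ℝ) ≤ e := Real.rpow_nonneg hy0 _
    have hec : e ≤ c := by
      have : y ^ (p - 1) ≤ 1 + y ^ p := by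
        rcases le_or_gt y 1 with h1 | h1
        · have h2 : y ^ (p - 1) ≤ 1 := Real.rpow_le_one hy0 h1 (by linarith)
          have h3 : (0 : ℝ) ≤ y ^ p := Real.rpow_nonneg hy0 p
          linarith
        · have h2 : y ^ (p - 1) ≤ y ^ p :=
            Real.rpow_le_rpow_of_exponent_le h1.le (by linarith)
          linarith
      simpa [hedef, hwdef] using this
    have hnum : -(2 * a * b * c ^ 2 - a ^ 2 * (2 * c * (p * e))) ≤
        (1 + 2 * p) * (a ^ 2 + b ^ 2) * c ^ 2 := by
      have h₁ : -(2 * a * b) * c ^ 2 ≤ (a ^ 2 + b ^ 2) * c ^ 2 := by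
        nlinarith [sq_nonneg ((a + b) * c)]
      have h₂ : a ^ 2 * (2 * c * (p * e)) ≤ a ^ 2 * (2 * c * (p * c)) := by
        have h2c : (0 : ℝ) ≤ 2 * a ^ 2 * c * p := by positivity
        nlinarith
      nlinarith [sq_nonneg (b * c), mul_nonneg (mul_nonneg (sq_nonneg b) (sq_nonneg c)) hp0.le]
    have hDform : -D y =
        -(2 * a * b * c ^ 2 - a ^ 2 * (2 * c * (p * e))) / (c ^ 2) ^ 2 := by
      simp only [hDdef]; ring
    rw [hDform]
    have hrhs : (1 + 2 * p) * (g₁ y + g₂ y) =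
        (1 + 2 * p) * (a ^ 2 + b ^ 2) * c ^ 2 / (c ^ 2) ^ 2 := by
      simp only [hg₁def, hg₂def, div_pow]
      change (1 + 2 * p) * (a ^ 2 / c ^ 2 + b ^ 2 / c ^ 2) = _
      field_simp
    rw [hrhs]
    exact div_le_div_of_nonneg_right hnum (by positivity)
  -- interval integral bound
  have hcontOn : ∀ g : ℝ → ℝ, Continuous g →
      ContinuousOn (fun y => (g y / w y) ^ 2) (Set.Icc x T) := by
    intro g hgc
    apply ContinuousOn.pow
    apply ContinuousOn.div hgc.continuousOn hwcont.continuousOn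
    intro y hy
    exact (hwpos y (le_trans hx hy.1)).ne'
  have hintR : IntervalIntegrable (fun y => (1 + 2 * p) * (g₁ y + g₂ y)) volume x T := by
    apply ContinuousOn.intervalIntegrable
    rw [Set.uIcc_of_le hxT.le]
    exact ContinuousOn.const_smul ((hcontOn f hfc).add (hcontOn (deriv f) hf'c)) (1 + 2 * p)
  have step1 : f x ^ 2 / w x ^ 2 ≤ ∫ y in x..T, (1 + 2 * p) * (g₁ y + g₂ y) := by
    rw [hfx2]
    exact intervalIntegral.integral_mono_on hxT.le hDint.neg hintR hptwise
  have hsub : Set.Ioc x T ⊆ Set.Ioi (0 : ℝ) := fun y hy => lt_of_le_of_lt hx hy.1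
  have step2 : (∫ y in x..T, (1 + 2 * p) * (g₁ y + g₂ y)) ≤
      (1 + 2 * p) * ((∫ y in Set.Ioi (0 : ℝ), g₁ y) + ∫ y in Set.Ioi (0 : ℝ), g₂ y) := by
    rw [intervalIntegral.integral_of_le hxT.le, integral_const_mul]
    apply mul_le_mul_of_nonneg_left ?_ (by linarith)
    calc (∫ y in Set.Ioc x T, (g₁ y + g₂ y))
        ≤ ∫ y in Set.Ioi (0 : ℝ), (g₁ y + g₂ y) := by
          apply setIntegral_mono_set (hI₁.add hI₂)
          · exact ae_of_all _ fun y => add_nonneg (hg₁nonneg y) (hg₂nonneg y)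
          · exact HasSubset.Subset.eventuallyLE hsub
      _ = _ := integral_add hI₁ hI₂
  set S : ℝ := (∫ y in Set.Ioi (0 : ℝ), g₁ y) + ∫ y in Set.Ioi (0 : ℝ), g₂ y with hSdef
  have hS0 : 0 ≤ S := by
    apply add_nonneg
    · exact setIntegral_nonneg measurableSet_Ioi fun y _ => hg₁nonneg y
    · exact setIntegral_nonneg measurableSet_Ioi fun y _ => hg₂nonneg y
  have final : f x ^ 2 / w x ^ 2 ≤ (1 + 2 * p) * S := step1.trans step2
  have hsqrt : |f x| / w x ≤ Real.sqrt ((1 + 2 * p) * S) := by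
    apply Real.le_sqrt_of_sq_le
    calc (|f x| / w x) ^ 2 = f x ^ 2 / w x ^ 2 := by rw [div_pow, sq_abs]
      _ ≤ _ := final
  calc |f x| / (1 + x ^ p) = |f x| / w x := rfl
    _ ≤ Real.sqrt ((1 + 2 * p) * S) := hsqrt
    _ = Real.sqrt (1 + 2 * p) * Real.sqrt S := Real.sqrt_mul (by linarith) S
    _ ≤ (1 + 2 * p) * Real.sqrt S := by
        apply mul_le_mul_of_nonneg_right ?_ (Real.sqrt_nonneg S)
        have h := Real.sqrt_le_sqrt (show 1 + 2 * p ≤ (1 + 2 * p) ^ 2 by nlinarith)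
        rwa [Real.sqrt_sq (by linarith)] at h
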